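/- arXiv:2001.00993 — 2 statements merged into one kernel-verified Lean document; each statement's English description precedes it below -/
import Mathlib

section
/- Let Γ ⊂ ℝ^n be an open convex symmetric cone with vertex at the origin satisfying Γ_n ⊆ Γ ⊆ Γ_1. Then there exists a unique t ∈ [0, n-1] such that (-t, 1, ..., 1) ∈ ∂Γ. -/
/-- The vector `(-t, 1, ..., 1)`. -/
def vecT (n : ℕ) (t : ℝ) : Fin n → ℝ := fun i => if i.val = 0 then -t else 1

lemma sum_vecT (n : ℕ) (hn : 1 ≤ n) (t : ℝ) : ∑ i, vecT n t i = (n : ℝ) - 1 - t := by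
  have h0 : (0 : ℕ) < n := hn
  have key : ∀ i : Fin n, vecT n t i
      = (if i = (⟨0, h0⟩ : Fin n) then -t - 1 else 0) + 1 := by
    intro i
    by_cases h : i = ⟨0, h0⟩
    · simp [vecT, h]
    · have hv : i.val ≠ 0 := fun hv => h (Fin.ext hv)
      simp [vecT, hv, h]
  rw [Finset.sum_congr rfl fun i _ => key i, Finset.sum_add_distrib,
    Finset.sum_ite_eq' Finset.univ, Finset.sum_const]
  simp
  ring

/-- For an open convex symmetric cone `Γ` with `Γ_n ⊆ Γ ⊆ Γ_1`, there is a unique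
`t ∈ [0, n-1]` with `(-t, 1, ..., 1) ∈ ∂Γ`. -/
theorem exists_unique_muPlus (n : ℕ) (hn : 1 ≤ n) (Γ : Set (Fin n → ℝ))
    (hopen : IsOpen Γ) (hconv : Convex ℝ Γ)
    (hsymm : ∀ σ : Equiv.Perm (Fin n), ∀ x ∈ Γ, (fun i => x (σ i)) ∈ Γ)
    (hcone : ∀ s : ℝ, 0 < s → ∀ x ∈ Γ, s • x ∈ Γ)
    (hsub : {x : Fin n → ℝ | ∀ i, 0 < x i} ⊆ Γ)
    (hsup : Γ ⊆ {x : Fin n → ℝ | 0 < ∑ i, x i}) :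
    ∃! t : ℝ, t ∈ Set.Icc (0 : ℝ) ((n : ℝ) - 1) ∧ vecT n t ∈ frontier Γ := by
  set g : ℝ → (Fin n → ℝ) := fun t => vecT n t with hg
  have hgc : Continuous g := by
    apply continuous_pi
    intro i
    by_cases h : i.val = 0 <;> simp only [hg, vecT, h, if_true, if_false] <;> fun_prop
  set A : Set ℝ := g ⁻¹' Γ with hA
  have hAopen : IsOpen A := hopen.preimage hgc
  have hneg : ∀ t : ℝ, t < 0 → t ∈ A := by
    intro t ht
    apply hsub
    intro i
    by_cases h : i.val = 0 <;> simp [hg, vecT, h] <;> linarith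
  have hbdd : ∀ t ∈ A, t < (n : ℝ) - 1 := by
    intro t ht
    have h2 := hsup ht
    simp only [Set.mem_setOf_eq] at h2
    have h3 : ∑ i, g t i = (n : ℝ) - 1 - t := sum_vecT n hn t
    rw [h3] at h2
    linarith
  have hne : A.Nonempty := ⟨-1, hneg _ (by norm_num)⟩
  have hbdda : BddAbove A := ⟨(n : ℝ) - 1, fun t ht => le_of_lt (hbdd t ht)⟩
  set t₀ := sSup A with ht₀
  have ht₀ge : 0 ≤ t₀ := by
    by_contra h
    push_neg at h
    have h1 : t₀ / 2 ∈ A := hneg _ (by linarith)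
    have := le_csSup hbdda h1
    linarith
  have ht₀le : t₀ ≤ (n : ℝ) - 1 := csSup_le hne fun t ht => le_of_lt (hbdd t ht)
  have hnotmem : t₀ ∉ A := by
    intro hmem
    rcases Metric.isOpen_iff.1 hAopen t₀ hmem with ⟨δ, hδ, hball⟩
    have hd : dist (t₀ + δ / 2) t₀ < δ := by
      rw [Real.dist_eq]
      have he : t₀ + δ / 2 - t₀ = δ / 2 := by ring
      rw [he, abs_of_pos (by linarith)]; linarith
    have h1 : t₀ + δ / 2 ∈ A := hball hd
    have := le_csSup hbdda h1
    linarith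
  have hcl : g t₀ ∈ closure Γ := by
    have h1 : t₀ ∈ closure A := csSup_mem_closure hne hbdda
    exact hgc.closure_preimage_subset Γ h1
  have hfront : g t₀ ∈ frontier Γ := by
    rw [hopen.frontier_eq]
    exact ⟨hcl, hnotmem⟩
  -- affine property of g
  have hgaff : ∀ p q a b : ℝ, p + q = 1 → g (p * a + q * b) = p • g a + q • g b := by
    intro p q a b hpq
    funext i
    by_cases h : i.val = 0 <;>
      simp only [hg, vecT, h, if_true, if_false, Pi.add_apply, Pi.smul_apply,
        smul_eq_mul] <;> [ring; linarith]
  have hAconv : Convex ℝ A := by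
    intro a ha b hb p q hp hq hpq
    have : g (p * a + q * b) ∈ Γ := by
      rw [hgaff p q a b hpq]
      exact hconv ha hb hp hq hpq
    rw [smul_eq_mul, smul_eq_mul]; exact this
  refine ⟨t₀, ⟨⟨ht₀ge, ht₀le⟩, hfront⟩, ?_⟩
  rintro t ⟨⟨ht0, htn⟩, htf⟩
  have htnotin : g t ∉ Γ := by
    intro hmem
    have : g t ∈ interior Γ := by rwa [hopen.interior_eq]
    exact htf.2 this
  have htcl : g t ∈ closure Γ := htf.1
  -- t ≤ t₀
  by_contra hne'
  rcases lt_or_gt_of_ne hne' with hlt | hgt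
  · -- t < t₀ : then t ∈ A, contradiction
    rcases exists_lt_of_lt_csSup hne hlt with ⟨s, hs, hts⟩
    have hseg : t ∈ segment ℝ (-1 : ℝ) s := by
      rw [segment_eq_Icc (by linarith)]
      exact ⟨by linarith, le_of_lt hts⟩
    exact htnotin (hAconv.segment_subset (hneg _ (by norm_num)) hs hseg)
  · -- t > t₀ : build a point of A above t₀
    set ε : ℝ := (t - t₀) / (2 * (t + 1)) with hε
    have htpos : 0 < t + 1 := by linarith
    have hεpos : 0 < ε := by
      rw [hε]; exact div_pos (by linarith) (by linarith)
    have hεlt : ε < 1 := by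
      rw [hε, div_lt_one (by linarith)]
      linarith
    have hy : (fun _ : Fin n => (1 : ℝ)) ∈ Γ := hsub fun i => one_pos
    have hy' : (fun _ : Fin n => (1 : ℝ)) ∈ interior Γ := by rwa [hopen.interior_eq]
    have hcombo : ε • (fun _ : Fin n => (1 : ℝ)) + (1 - ε) • g t ∈ interior Γ :=
      Convex.combo_interior_closure_mem_interior hconv hy' htcl hεpos (by linarith)
        (by ring)
    have heq : ε • (fun _ : Fin n => (1 : ℝ)) + (1 - ε) • g t = g ((1 - ε) * t - ε) := by
      funext i
      by_cases h : i.val = 0 <;>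
        simp only [hg, vecT, h, if_true, if_false, Pi.add_apply, Pi.smul_apply,
          smul_eq_mul] <;> ring
    have hmem : ((1 - ε) * t - ε) ∈ A := by
      have h2 := hcombo
      rw [heq, hopen.interior_eq] at h2
      exact h2
    have hle := le_csSup hbdda hmem
    have hεval : ε * (t + 1) = (t - t₀) / 2 := by
      rw [hε]; field_simp
    nlinarith
end

section
/- Let Γ ⊂ ℝ^n be an open convex symmetric cone with vertex at the origin satisfying Γ_n ⊆ Γ ⊆ Γ_1, and let f : Γ → ℝ be a C^1 function that is positive, concave, homogeneous of degree one, and has positive partial derivatives f_{λ_i} > 0 on Γ. Then Σ_{i=1}^n f_{λ_i}(λ) ≥ f(1, ..., 1) > 0 for all λ ∈ Γ. -/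
open Finset

/-- Gradient inequality for concave functions: the tangent plane lies above the graph. -/
lemma concave_grad_ineq {E : Type*} [NormedAddCommGroup E] [NormedSpace ℝ E]
    {f : E → ℝ} {s : Set E} (hconc : ConcaveOn ℝ s f) {x y : E}
    (hx : x ∈ s) (hy : y ∈ s) {L : E →L[ℝ] ℝ} (hd : HasFDerivAt f L x) :
    f y ≤ f x + L (y - x) := by
  set g : ℝ → ℝ := fun t => f (x + t • (y - x)) with hg
  have hc : HasDerivAt (fun t : ℝ => x + t • (y - x)) (y - x) 0 := by
    simpa using (((hasDerivAt_id (0:ℝ)).smul_const (y - x)).const_add x)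
  have hd' : HasFDerivAt f L (x + (0:ℝ) • (y - x)) := by simpa using hd
  have hgd : HasDerivAt g (L (y - x)) 0 := by
    have := hd'.comp_hasDerivAt 0 hc
    exact this
  have hslope : Filter.Tendsto (slope g 0) (nhdsWithin 0 {(0:ℝ)}ᶜ) (nhds (L (y - x))) :=
    hasDerivAt_iff_tendsto_slope.mp hgd
  have hslope' : Filter.Tendsto (slope g 0) (nhdsWithin 0 (Set.Ioi 0)) (nhds (L (y - x))) :=
    hslope.mono_left (nhdsWithin_mono _ (fun t ht => ne_of_gt ht))
  have hbound : ∀ᶠ t in nhdsWithin (0:ℝ) (Set.Ioi 0), f y - f x ≤ slope g 0 t := by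
    filter_upwards [Ioo_mem_nhdsGT_of_mem (by norm_num : (0:ℝ) ∈ Set.Ico 0 1)] with t ht
    have ht0 : 0 < t := ht.1
    have ht1 : t < 1 := ht.2
    have hmem : (1 - t) • x + t • y ∈ s := hconc.1 hx hy (by linarith) (le_of_lt ht0) (by ring)
    have hcc := hconc.2 hx hy (by linarith : (0:ℝ) ≤ 1 - t) (le_of_lt ht0) (by ring)
    have heq : (1 - t) • x + t • y = x + t • (y - x) := by
      rw [sub_smul, one_smul, smul_sub]; abel
    rw [heq] at hcc
    have hs : slope g 0 t = (g t - g 0) / t := by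
      simp [slope, div_eq_inv_mul]
    rw [hs, le_div_iff₀ ht0]
    have hg0 : g 0 = f x := by simp [hg]
    have hgt : (1 - t) * f x + t * f y ≤ g t := by simpa [smul_eq_mul, hg] using hcc
    nlinarith
  have := ge_of_tendsto hslope' hbound
  linarith

/-- For an open convex symmetric cone `Γ_n ⊆ Γ ⊆ Γ_1` and `f : Γ → ℝ` that is `C^1`,
positive, concave, homogeneous of degree one, with positive partial derivatives, one has
`Σ_i f_{λ_i}(λ) ≥ f(1,...,1) > 0` on `Γ`. -/
theorem sum_partials_ge (n : ℕ) (hn : 1 ≤ n) (Γ : Set (Fin n → ℝ))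
    (hopen : IsOpen Γ) (hconv : Convex ℝ Γ)
    (hsymm : ∀ σ : Equiv.Perm (Fin n), ∀ x ∈ Γ, (fun i => x (σ i)) ∈ Γ)
    (hcone : ∀ s : ℝ, 0 < s → ∀ x ∈ Γ, s • x ∈ Γ)
    (hsub : {x : Fin n → ℝ | ∀ i, 0 < x i} ⊆ Γ)
    (hsup : Γ ⊆ {x : Fin n → ℝ | 0 < ∑ i, x i})
    (f : (Fin n → ℝ) → ℝ) (f' : (Fin n → ℝ) → ((Fin n → ℝ) →L[ℝ] ℝ))
    (hderiv : ∀ x ∈ Γ, HasFDerivAt f (f' x) x)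
    (hpos : ∀ x ∈ Γ, 0 < f x)
    (hconc : ConcaveOn ℝ Γ f)
    (hhom : ∀ s : ℝ, 0 < s → ∀ x ∈ Γ, f (s • x) = s * f x)
    (hmono : ∀ x ∈ Γ, ∀ i, 0 < f' x (Pi.single i 1)) :
    (0 < f (fun _ => 1)) ∧
      ∀ x ∈ Γ, f (fun _ => 1) ≤ ∑ i, f' x (Pi.single i 1) := by
  set e : Fin n → ℝ := fun _ => 1 with he
  have heΓ : e ∈ Γ := hsub (fun i => by norm_num [he])
  have hadd : ∀ a ∈ Γ, ∀ b ∈ Γ, a + b ∈ Γ := by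
    intro a ha b hb
    have hm : (1/2 : ℝ) • a + (1/2 : ℝ) • b ∈ Γ :=
      hconv ha hb (by norm_num) (by norm_num) (by norm_num)
    have := hcone 2 (by norm_num) _ hm
    simpa [smul_add, smul_smul] using this
  refine ⟨hpos e heΓ, fun x hx => ?_⟩
  -- key: f e ≤ f' x e
  have hsum : (∑ i, f' x (Pi.single i 1)) = f' x e := by
    rw [← map_sum]
    congr 1
    exact funext fun j => by simpa [he] using congrFun (Finset.univ_sum_single (fun _ : Fin n => (1:ℝ))) j
  rw [hsum]
  -- For each t > 0 : f (t • x + e) ≤ t * f x + f' x e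
  have key : ∀ t : ℝ, 0 < t → f (t • x + e) ≤ t * f x + f' x e := by
    intro t ht
    have hy : x + t⁻¹ • e ∈ Γ := hadd x hx _ (hcone _ (by positivity) _ heΓ)
    have hgi := concave_grad_ineq hconc hx hy (hderiv x hx)
    have hsimp : f' x (x + t⁻¹ • e - x) = t⁻¹ * f' x e := by
      simp [map_smul]
    have htxe : t • x + e ∈ Γ := hadd _ (hcone t ht x hx) e heΓ
    have hscale : f (x + t⁻¹ • e) = t⁻¹ * f (t • x + e) := by
      have := hhom t⁻¹ (by positivity) _ htxe
      rw [← this]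
      congr 1
      rw [smul_add, smul_smul, inv_mul_cancel₀ ht.ne', one_smul]
    rw [hscale, hsimp] at hgi
    have ht' : (0:ℝ) < t⁻¹ := by positivity
    calc f (t • x + e) = t * (t⁻¹ * f (t • x + e)) := by
          rw [← mul_assoc, mul_inv_cancel₀ ht.ne', one_mul]
      _ ≤ t * (f x + t⁻¹ * f' x e) := by
          exact mul_le_mul_of_nonneg_left hgi ht.le
      _ = t * f x + f' x e := by
          field_simp
  -- Take t → 0⁺
  have hcontf : ContinuousAt f e := (hderiv e heΓ).continuousAt
  have hlim1 : Filter.Tendsto (fun t : ℝ => f (t • x + e)) (nhdsWithin 0 (Set.Ioi 0))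
      (nhds (f e)) := by
    have hc : Filter.Tendsto (fun t : ℝ => t • x + e) (nhds 0) (nhds e) := by
      have : Continuous (fun t : ℝ => t • x + e) := by continuity
      simpa using this.tendsto 0
    exact (hcontf.tendsto.comp hc).mono_left nhdsWithin_le_nhds
  have hlim2 : Filter.Tendsto (fun t : ℝ => t * f x + f' x e) (nhdsWithin 0 (Set.Ioi 0))
      (nhds (f' x e)) := by
    have : Filter.Tendsto (fun t : ℝ => t * f x + f' x e) (nhds 0) (nhds (0 * f x + f' x e)) := by
      exact ((continuous_id.mul continuous_const).add continuous_const).tendsto 0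
    simpa using this.mono_left nhdsWithin_le_nhds
  exact le_of_tendsto_of_tendsto hlim1 hlim2 (eventually_nhdsWithin_of_forall (fun t ht => key t ht))
end
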